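/- Let b > 1 be an integer and σ > 0 a real number. Define w_m = (1 − b^{−σ}) ∑_{k=0}^{∞} b^{−σk} (1 − b^{−k})^m for each integer m ≥ 0 (the series converges). Then w_0 = 1 and, for every m ≥ 1, (b^{m+σ} − 1) w_m = ∑_{j=1}^{m} C(m,j) (b−1)^j w_{m−j}, where C(m,j) is the binomial coefficient. -/
import Mathlib


open Finset

/-- The solution w_m = (1 − b^{−σ}) ∑_{k=0}^∞ b^{−σk} (1 − b^{−k})^m of the modified
recurrence: the series converges, w_0 = 1 and, for m ≥ 1,
(b^{m+σ} − 1) w_m = ∑_{j=1}^{m} C(m,j) (b−1)^j w_{m−j}. -/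
theorem w_recurrence (b : ℕ) (hb : 1 < b) (σ : ℝ) (hσ : 0 < σ) (w : ℕ → ℝ)
    (hw : ∀ m : ℕ, w m = (1 - (b : ℝ) ^ (-σ)) *
      ∑' k : ℕ, (b : ℝ) ^ (-(σ * (k : ℝ))) * (1 - (b : ℝ) ^ (-(k : ℝ))) ^ m) :
    (∀ m : ℕ, Summable (fun k : ℕ =>
        (b : ℝ) ^ (-(σ * (k : ℝ))) * (1 - (b : ℝ) ^ (-(k : ℝ))) ^ m)) ∧
    w 0 = 1 ∧
    ∀ m : ℕ, 1 ≤ m → ((b : ℝ) ^ ((m : ℝ) + σ) - 1) * w m =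
      ∑ j ∈ Finset.Icc 1 m, (Nat.choose m j : ℝ) * ((b : ℝ) - 1) ^ j * w (m - j) := by
  have hB : (1:ℝ) < (b:ℝ) := by exact_mod_cast hb
  have hB0 : (0:ℝ) < (b:ℝ) := lt_trans one_pos hB
  set q : ℝ := (b:ℝ) ^ (-σ) with hqdef
  have hq0 : 0 < q := Real.rpow_pos_of_pos hB0 _
  have hq1 : q < 1 := Real.rpow_lt_one_of_one_lt_of_neg hB (neg_neg_of_pos hσ)
  have hqk : ∀ k : ℕ, (b:ℝ) ^ (-(σ * (k:ℝ))) = q ^ k := by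
    intro k
    rw [hqdef, ← Real.rpow_natCast ((b:ℝ) ^ (-σ)) k, ← Real.rpow_mul hB0.le, neg_mul]
  have hxk0 : ∀ k : ℕ, 0 ≤ 1 - (b:ℝ) ^ (-(k:ℝ)) := fun k =>
    sub_nonneg.2 (Real.rpow_le_one_of_one_le_of_nonpos hB.le
      (neg_nonpos.2 (Nat.cast_nonneg k)))
  have hxk1 : ∀ k : ℕ, 1 - (b:ℝ) ^ (-(k:ℝ)) ≤ 1 := fun k =>
    sub_le_self 1 (Real.rpow_nonneg hB0.le _)
  -- summability
  have hsum : ∀ m : ℕ, Summable (fun k : ℕ =>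
      (b : ℝ) ^ (-(σ * (k : ℝ))) * (1 - (b : ℝ) ^ (-(k : ℝ))) ^ m) := by
    intro m
    apply Summable.of_nonneg_of_le
      (fun k => mul_nonneg (Real.rpow_nonneg hB0.le _) (pow_nonneg (hxk0 k) m))
      (fun k => ?_) (summable_geometric_of_lt_one hq0.le hq1)
    rw [hqk k]
    calc q ^ k * (1 - (b:ℝ) ^ (-(k:ℝ))) ^ m
        ≤ q ^ k * 1 := by
          exact mul_le_mul_of_nonneg_left (pow_le_one₀ (hxk0 k) (hxk1 k))
            (pow_nonneg hq0.le k)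
      _ = q ^ k := mul_one _
  refine ⟨hsum, ?_, ?_⟩
  · -- w 0 = 1
    rw [hw 0]
    have h1 : (∑' k : ℕ, (b : ℝ) ^ (-(σ * (k : ℝ))) * (1 - (b : ℝ) ^ (-(k : ℝ))) ^ 0)
        = (1 - q)⁻¹ := by
      rw [tsum_congr (fun k => by rw [pow_zero, mul_one, hqk k])]
      exact tsum_geometric_of_lt_one hq0.le hq1
    rw [h1, mul_inv_cancel₀ (sub_ne_zero.2 (ne_of_gt (by linarith)))]
  · -- recurrence
    intro m hm
    set S : ℕ → ℝ := fun n => ∑' k : ℕ, q ^ k * (1 - (b:ℝ) ^ (-(k:ℝ))) ^ n with hSdef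
    have hSsum : ∀ n : ℕ, Summable (fun k : ℕ => q ^ k * (1 - (b:ℝ) ^ (-(k:ℝ))) ^ n) :=
      fun n => (hsum n).congr (fun k => by rw [hqk k])
    have hwS : ∀ n : ℕ, w n = (1 - q) * S n := fun n => by
      rw [hw n]; congr 1; exact tsum_congr fun k => by rw [hqk k]
    -- shift summability
    have hSsum' : Summable (fun k : ℕ =>
        q ^ (k+1) * (1 - (b:ℝ) ^ (-((k+1:ℕ):ℝ))) ^ m) :=
      ((summable_nat_add_iff 1).2 (hSsum m))
    -- key pointwise identity
    have key : ∀ k : ℕ, (∑ j ∈ Finset.Icc 1 m, (Nat.choose m j : ℝ) * ((b:ℝ) - 1) ^ j *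
        (q ^ k * (1 - (b:ℝ) ^ (-(k:ℝ))) ^ (m - j)))
        = (b:ℝ) ^ m * q⁻¹ * (q ^ (k+1) * (1 - (b:ℝ) ^ (-((k+1:ℕ):ℝ))) ^ m)
          - q ^ k * (1 - (b:ℝ) ^ (-(k:ℝ))) ^ m := by
      intro k
      set x : ℝ := 1 - (b:ℝ) ^ (-(k:ℝ)) with hxdef
      have hbinom : (((b:ℝ) - 1) + x) ^ m
          = ∑ j ∈ Finset.range (m+1), ((b:ℝ)-1) ^ j * x ^ (m - j) * (Nat.choose m j : ℝ) := by
        rw [add_pow]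
      have hins : Finset.range (m+1) = insert 0 (Finset.Icc 1 m) := by
        ext y; simp only [Finset.mem_range, Finset.mem_insert, Finset.mem_Icc]; omega
      have hsplit : (((b:ℝ) - 1) + x) ^ m
          = x ^ m + ∑ j ∈ Finset.Icc 1 m, ((b:ℝ)-1) ^ j * x ^ (m - j) * (Nat.choose m j : ℝ) := by
        rw [hbinom, hins, Finset.sum_insert (by simp)]
        norm_num
      -- b - 1 + x = b * (1 - b^{-(k+1)})
      have hshift : ((b:ℝ) - 1) + x = (b:ℝ) * (1 - (b:ℝ) ^ (-((k+1:ℕ):ℝ))) := by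
        have hbb : (b:ℝ) * (b:ℝ) ^ (-((k+1:ℕ):ℝ)) = (b:ℝ) ^ (-(k:ℝ)) := by
          nth_rewrite 1 [← Real.rpow_one (b:ℝ)]
          rw [← Real.rpow_add hB0]
          congr 1
          push_cast
          ring
        rw [hxdef, mul_sub, mul_one, hbb]
        ring
      have hfinal : ∑ j ∈ Finset.Icc 1 m, ((b:ℝ)-1) ^ j * x ^ (m - j) * (Nat.choose m j : ℝ)
          = (b:ℝ) ^ m * (1 - (b:ℝ) ^ (-((k+1:ℕ):ℝ))) ^ m - x ^ m := by
        have := hsplit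
        rw [hshift, mul_pow] at this
        linarith
      calc (∑ j ∈ Finset.Icc 1 m, (Nat.choose m j : ℝ) * ((b:ℝ) - 1) ^ j *
            (q ^ k * x ^ (m - j)))
          = q ^ k * ∑ j ∈ Finset.Icc 1 m, ((b:ℝ)-1) ^ j * x ^ (m - j) * (Nat.choose m j : ℝ) := by
            rw [Finset.mul_sum]; exact Finset.sum_congr rfl fun j _ => by ring
        _ = q ^ k * ((b:ℝ) ^ m * (1 - (b:ℝ) ^ (-((k+1:ℕ):ℝ))) ^ m - x ^ m) := by rw [hfinal]
        _ = (b:ℝ) ^ m * q⁻¹ * (q ^ (k+1) * (1 - (b:ℝ) ^ (-((k+1:ℕ):ℝ))) ^ m)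
            - q ^ k * x ^ m := by
            field_simp
            ring
    -- sum the identity
    have hRsum : ∑ j ∈ Finset.Icc 1 m, (Nat.choose m j : ℝ) * ((b : ℝ) - 1) ^ j * w (m - j)
        = (1 - q) * ∑' k : ℕ, (∑ j ∈ Finset.Icc 1 m, (Nat.choose m j : ℝ) * ((b:ℝ) - 1) ^ j *
            (q ^ k * (1 - (b:ℝ) ^ (-(k:ℝ))) ^ (m - j))) := by
      rw [Summable.tsum_finsetSum (fun j _ => ((hSsum (m - j)).mul_left _))]
      rw [Finset.mul_sum]
      refine Finset.sum_congr rfl fun j _ => ?_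
      rw [hwS (m - j), tsum_mul_left]
      ring
    -- evaluate the tsum of the RHS of key
    have hS0 : q ^ 0 * (1 - (b:ℝ) ^ (-((0:ℕ):ℝ))) ^ m = 0 := by
      simp [Real.rpow_zero, zero_pow (by omega : m ≠ 0)]
    have hshiftsum : (∑' k : ℕ, q ^ (k+1) * (1 - (b:ℝ) ^ (-((k+1:ℕ):ℝ))) ^ m) = S m := by
      have h := Summable.tsum_eq_zero_add (hSsum m)
      rw [hS0, zero_add] at h
      exact h.symm
    have htsum : (∑' k : ℕ, (∑ j ∈ Finset.Icc 1 m, (Nat.choose m j : ℝ) * ((b:ℝ) - 1) ^ j *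
        (q ^ k * (1 - (b:ℝ) ^ (-(k:ℝ))) ^ (m - j))))
        = (b:ℝ) ^ m * q⁻¹ * S m - S m := by
      rw [tsum_congr key]
      rw [Summable.tsum_sub (hSsum'.mul_left _) (hSsum m), tsum_mul_left, hshiftsum]
    -- identify b^(m+σ)
    have hpow : (b:ℝ) ^ ((m:ℝ) + σ) = (b:ℝ) ^ m * q⁻¹ := by
      rw [Real.rpow_add hB0, Real.rpow_natCast, hqdef, Real.rpow_neg hB0.le, inv_inv]
    rw [hRsum, htsum, hwS m, hpow]
    ring
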